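/- The plus order is a partial order on L(H,K): the relation 'A ≤⁺ B iff range(A) ⊆ range(B), range(A*) ⊆ range(B*), and there exist bounded idempotents Q̃ on K and Q on H with A = Q̃ B Q' is reflexive, antisymmetric, and transitive. (In particular, transitivity: if A ≤⁺ B and B ≤⁺ C then A ≤⁺ C.) -/

import Mathlib

open ContinuousLinearMap

variable {H K : Type*} [NormedAddCommGroup H] [InnerProductSpace ℂ H] [CompleteSpace H]
  [NormedAddCommGroup K] [InnerProductSpace ℂ K] [CompleteSpace K]

/-- The plus order on `L(H,K)`. -/
def plusOrder (A B : H →L[ℂ] K) : Prop :=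
  LinearMap.range (A : H →ₗ[ℂ] K) ≤ LinearMap.range (B : H →ₗ[ℂ] K) ∧
  LinearMap.range ((adjoint A : K →L[ℂ] H) : K →ₗ[ℂ] H) ≤
    LinearMap.range ((adjoint B : K →L[ℂ] H) : K →ₗ[ℂ] H) ∧
  ∃ (Qt : K →L[ℂ] K) (Q : H →L[ℂ] H), Qt ∘L Qt = Qt ∧ Q ∘L Q = Q ∧ A = Qt ∘L (B ∘L Q)

open scoped ComplexInnerProductSpace

/-- If `ran A* ⊆ ran B*` then `ker B ⊆ ker A`. -/
lemma plusAux_ker {A B : H →L[ℂ] K}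
    (h : LinearMap.range ((adjoint A : K →L[ℂ] H) : K →ₗ[ℂ] H) ≤
      LinearMap.range ((adjoint B : K →L[ℂ] H) : K →ₗ[ℂ] H))
    {x : H} (hx : B x = 0) : A x = 0 := by
  have h1 : ⟪A x, A x⟫ = (0 : ℂ) := by
    obtain ⟨w, hw⟩ := h (LinearMap.mem_range_self (adjoint A : K →ₗ[ℂ] H) (A x))
    calc ⟪A x, A x⟫ = ⟪x, adjoint A (A x)⟫ := (adjoint_inner_right A x (A x)).symm
      _ = ⟪x, adjoint B w⟫ := by simp only [ContinuousLinearMap.coe_coe] at hw; rw [hw]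
      _ = ⟪B x, w⟫ := adjoint_inner_right B x w
      _ = 0 := by rw [hx, inner_zero_left]
  exact inner_self_eq_zero.mp h1

/-- A continuous operator fixing a submodule pointwise fixes its closure pointwise. -/
lemma plusAux_fix_closure {E : Type*} [NormedAddCommGroup E] [InnerProductSpace ℂ E]
    {T : E →L[ℂ] E} {S : Submodule ℂ E}
    (h : ∀ v ∈ S, T v = v) : ∀ v ∈ S.topologicalClosure, T v = v := by
  intro v hv
  have hc : IsClosed {v : E | T v = v} := isClosed_eq T.continuous continuous_id
  have hsub : (S : Set E) ⊆ {v : E | T v = v} := fun v hv => h v hv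
  have hmin := closure_minimal hsub hc
  have hv' : v ∈ closure (S : Set E) := by
    rw [← Submodule.topologicalClosure_coe]; exact hv
  exact hmin hv'

lemma plusOrder_refl (A : H →L[ℂ] K) : plusOrder A A := by
  refine ⟨le_rfl, le_rfl, ContinuousLinearMap.id ℂ K, ContinuousLinearMap.id ℂ H, ?_, ?_, ?_⟩ <;>
    ext x <;> simp

lemma plusOrder_antisymm {A B : H →L[ℂ] K} (h1 : plusOrder A B) (h2 : plusOrder B A) : A = B := by
  obtain ⟨hr, hr', Qt, Q, hQt, hQ, hA⟩ := h1
  obtain ⟨hs, hs', -⟩ := h2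
  have hQt' : ∀ v, Qt (Qt v) = Qt v := fun v => by
    simpa using DFunLike.congr_fun hQt v
  have hQ' : ∀ x, Q (Q x) = Q x := fun x => by
    simpa using DFunLike.congr_fun hQ x
  have hA' : ∀ x, A x = Qt (B (Q x)) := fun x => by
    simpa using DFunLike.congr_fun hA x
  have hQtA : ∀ x, Qt (A x) = A x := fun x => by rw [hA' x, hQt']
  have hAQ : ∀ x, A (Q x) = A x := fun x => by rw [hA' (Q x), hQ' x, ← hA' x]
  have hQtB : ∀ v, Qt (B v) = B v := by
    intro v
    obtain ⟨y, hy⟩ := hs (LinearMap.mem_range_self (B : H →ₗ[ℂ] K) v)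
    simp only [ContinuousLinearMap.coe_coe] at hy; rw [← hy, hQtA]
  have hAQop : A ∘L Q = A := by ext x; simpa using hAQ x
  have hQadjA : ∀ y, adjoint Q (adjoint A y) = adjoint A y := by
    intro y
    have : adjoint Q ∘L adjoint A = adjoint A := by
      rw [← adjoint_comp, hAQop]
    simpa using DFunLike.congr_fun this y
  have hQadjB : ∀ v, adjoint Q (adjoint B v) = adjoint B v := by
    intro v
    obtain ⟨y, hy⟩ := hs' (LinearMap.mem_range_self (adjoint B : K →ₗ[ℂ] H) v)
    simp only [ContinuousLinearMap.coe_coe] at hy; rw [← hy, hQadjA]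
  have hBQ : B ∘L Q = B := by
    have hadj : adjoint (B ∘L Q) = adjoint B := by
      rw [adjoint_comp]; ext v; simpa using hQadjB v
    calc B ∘L Q = adjoint (adjoint (B ∘L Q)) := (adjoint_adjoint _).symm
      _ = adjoint (adjoint B) := by rw [hadj]
      _ = B := adjoint_adjoint _
  have hBQ' : ∀ x, B (Q x) = B x := fun x => by simpa using DFunLike.congr_fun hBQ x
  ext x
  rw [hA' x, hBQ' x, hQtB]

lemma plusOrder_trans {A B C : H →L[ℂ] K} (h1 : plusOrder A B) (h2 : plusOrder B C) :
    plusOrder A C := by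
  obtain ⟨hr1, hr1', Qt, Q, hQt, hQ, hA⟩ := h1
  obtain ⟨hr2, hr2', Pt, P, hPt, hP, hB⟩ := h2
  refine ⟨hr1.trans hr2, hr1'.trans hr2', ?_⟩
  -- pointwise versions of the hypotheses
  have hQt' : ∀ v, Qt (Qt v) = Qt v := fun v => by simpa using DFunLike.congr_fun hQt v
  have hQ' : ∀ x, Q (Q x) = Q x := fun x => by simpa using DFunLike.congr_fun hQ x
  have hPt' : ∀ v, Pt (Pt v) = Pt v := fun v => by simpa using DFunLike.congr_fun hPt v
  have hP' : ∀ x, P (P x) = P x := fun x => by simpa using DFunLike.congr_fun hP x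
  have hA' : ∀ x, A x = Qt (B (Q x)) := fun x => by simpa using DFunLike.congr_fun hA x
  have hB' : ∀ x, B x = Pt (C (P x)) := fun x => by simpa using DFunLike.congr_fun hB x
  have hQtA : ∀ x, Qt (A x) = A x := fun x => by rw [hA' x, hQt']
  have hAQ : ∀ x, A (Q x) = A x := fun x => by rw [hA' (Q x), hQ' x, ← hA' x]
  have hPtB : ∀ x, Pt (B x) = B x := fun x => by rw [hB' x, hPt']
  have hBP : ∀ x, B (P x) = B x := fun x => by rw [hB' (P x), hP' x, ← hB' x]
  -- the closed subspaces cl(ran A) and cl(ran A*)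
  set M : Submodule ℂ K := (LinearMap.range (A : H →ₗ[ℂ] K)).topologicalClosure with hMdef
  set N : Submodule ℂ H := (LinearMap.range (adjoint A : K →ₗ[ℂ] H)).topologicalClosure with hNdef
  haveI : CompleteSpace M := (Submodule.isClosed_topologicalClosure _).completeSpace_coe
  haveI : CompleteSpace N := (Submodule.isClosed_topologicalClosure _).completeSpace_coe
  set E : K →L[ℂ] K := M.subtypeL ∘L M.orthogonalProjectionOnto with hEdef
  set F : H →L[ℂ] H := N.subtypeL ∘L N.orthogonalProjectionOnto with hFdef
  have hEfix : ∀ v ∈ M, E v = v := fun v hv => Submodule.starProjection_eq_self_iff.mpr hv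
  have hFfix : ∀ v ∈ N, F v = v := fun v hv => Submodule.starProjection_eq_self_iff.mpr hv
  have hEmem : ∀ v, E v ∈ M := fun v => (M.orthogonalProjectionOnto v).2
  have hFmem : ∀ v, F v ∈ N := fun v => (N.orthogonalProjectionOnto v).2
  have hEA : ∀ x, E (A x) = A x := fun x =>
    hEfix _ ((LinearMap.range (A : H →ₗ[ℂ] K)).le_topologicalClosure (LinearMap.mem_range_self (A : H →ₗ[ℂ] K) x))
  -- Qt fixes M pointwise
  have hQtM : ∀ v ∈ M, Qt v = v := by
    refine plusAux_fix_closure ?_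
    rintro v ⟨x, rfl⟩
    exact hQtA x
  -- Pt fixes M pointwise (since it fixes ran B ⊇ ran A)
  have hPtM : ∀ v ∈ M, Pt v = v := by
    refine plusAux_fix_closure ?_
    rintro v ⟨x, rfl⟩
    obtain ⟨y, hy⟩ := hr1 (LinearMap.mem_range_self (A : H →ₗ[ℂ] K) x)
    simp only [ContinuousLinearMap.coe_coe] at hy ⊢; rw [← hy, hPtB]
  -- adjoint Q fixes N pointwise
  have hAQop : A ∘L Q = A := by ext x; simpa using hAQ x
  have hQN : ∀ v ∈ N, adjoint Q v = v := by
    refine plusAux_fix_closure ?_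
    rintro v ⟨y, rfl⟩
    have : adjoint Q ∘L adjoint A = adjoint A := by rw [← adjoint_comp, hAQop]
    simpa using DFunLike.congr_fun this y
  -- F ∘ Q = F
  have hFsa : adjoint F = F := (isSelfAdjoint_starProjection N).adjoint_eq
  have hFQ : ∀ x, F (Q x) = F x := by
    have hadj : adjoint (F ∘L Q) = F := by
      rw [adjoint_comp, hFsa]
      ext v
      simpa using hQN (F v) (hFmem v)
    have : F ∘L Q = F := by
      calc F ∘L Q = adjoint (adjoint (F ∘L Q)) := (adjoint_adjoint _).symm
        _ = adjoint F := by rw [hadj]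
        _ = F := hFsa
    intro x; simpa using DFunLike.congr_fun this x
  -- ker A ⊆ ker F
  have hFzero : ∀ z, A z = 0 → F z = 0 := by
    intro z hz
    have hzN : z ∈ Nᗮ := by
      have hc : IsClosed {w : H | ⟪w, z⟫ = (0 : ℂ)} :=
        isClosed_eq (continuous_id.inner continuous_const) continuous_const
      have hsub : ((LinearMap.range (adjoint A : K →ₗ[ℂ] H) : Submodule ℂ H) : Set H) ⊆
          {w : H | ⟪w, z⟫ = (0 : ℂ)} := by
        rintro w ⟨y, rfl⟩
        show ⟪adjoint A y, z⟫ = (0 : ℂ)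
        rw [adjoint_inner_left, hz, inner_zero_right]
      have hmin := closure_minimal hsub hc
      rw [Submodule.mem_orthogonal]
      intro u hu
      have hu' : u ∈ closure ((LinearMap.range (adjoint A : K →ₗ[ℂ] H) : Submodule ℂ H) : Set H) := by
        rw [← Submodule.topologicalClosure_coe]; exact hu
      exact hmin hu'
    have : N.orthogonalProjectionOnto z = 0 :=
      Submodule.orthogonalProjectionOnto_apply_of_mem_orthogonal hzN
    show N.subtypeL (N.orthogonalProjectionOnto z) = 0
    rw [this]; simp
  -- A ∘ F = A
  have hAF : ∀ x, A (F x) = A x := by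
    intro x
    have hzN : x - F x ∈ Nᗮ := Submodule.sub_starProjection_mem_orthogonal (K := N) x
    have hz0 : A (x - F x) = 0 := by
      set z := x - F x with hzdef
      have h1 : ⟪A z, A z⟫ = (0 : ℂ) := by
        calc ⟪A z, A z⟫ = ⟪z, adjoint A (A z)⟫ := (adjoint_inner_right A z (A z)).symm
          _ = 0 := by
              rw [Submodule.mem_orthogonal'] at hzN
              exact hzN _ ((LinearMap.range (adjoint A : K →ₗ[ℂ] H)).le_topologicalClosure
                (LinearMap.mem_range_self (adjoint A : K →ₗ[ℂ] H) (A z)))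
      exact inner_self_eq_zero.mp h1
    have := map_sub A x (F x)
    rw [hz0] at this
    exact (sub_eq_zero.mp this.symm).symm
  -- ker P ⊆ ker B ⊆ ker A ⊆ ker F, hence F ∘ P = F
  have hFP : ∀ x, F (P x) = F x := by
    intro x
    have hBz : B (P x - x) = 0 := by rw [map_sub, hBP, sub_self]
    have hAz : A (P x - x) = 0 := plusAux_ker hr1' hBz
    have hFz : F (P x - x) = 0 := hFzero _ hAz
    rw [map_sub] at hFz
    exact sub_eq_zero.mp hFz
  -- assemble the idempotents
  refine ⟨(E ∘L Qt) ∘L Pt, P ∘L (Q ∘L F), ?_, ?_, ?_⟩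
  · ext v
    show E (Qt (Pt (E (Qt (Pt v))))) = E (Qt (Pt v))
    set w := E (Qt (Pt v)) with hwdef
    have hwM : w ∈ M := hEmem _
    rw [hPtM w hwM, hQtM w hwM, hEfix w hwM]
  · ext x
    show P (Q (F (P (Q (F x))))) = P (Q (F x))
    rw [hFP (Q (F x)), hFQ (F x), hFfix (F x) (hFmem x)]
  · ext x
    simp only [ContinuousLinearMap.comp_apply]
    rw [← hB' (Q (F x)), ← hA' (F x), hEA (F x), hAF x]

theorem stmt3 :
    (∀ A : H →L[ℂ] K, plusOrder A A) ∧
    (∀ A B : H →L[ℂ] K, plusOrder A B → plusOrder B A → A = B) ∧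
    (∀ A B C : H →L[ℂ] K, plusOrder A B → plusOrder B C → plusOrder A C) := by
  exact ⟨plusOrder_refl, fun A B => plusOrder_antisymm, fun A B C => plusOrder_trans⟩
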